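/- Let p ≥ 1 and n ≥ 2^{3p+2}·p² + p + 1. The maximum size of a family 𝓕 ⊆ 2^[n] such that |A∩B| + |B∩C| + |C∩A| ≥ 3n − (6p+4) for all A, B, C ∈ 𝓕 equals Σ_{i=0}^{p} C(n,i) + C(n−1, p). -/

import Mathlib

open Finset

/-- `d A B C = |A∩B| + |B∩C| + |C∩A|`. -/
def dd (A B C : Finset ℕ) : ℕ := (A ∩ B).card + (B ∩ C).card + (C ∩ A).card

lemma chooseMonoLeft {n k m : ℕ} (hkm : k ≤ m) (hm : m ≤ n / 2) :
    n.choose k ≤ n.choose m := by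
  induction m, hkm using Nat.le_induction with
  | base => exact le_rfl
  | succ m hkm ih =>
      exact le_trans (ih (by omega)) (Nat.choose_le_succ_of_lt_half_left (by omega))

lemma keyIneq {n p : ℕ} (hp : 1 ≤ p) (hn : 2 ^ (3 * p + 2) * p ^ 2 + p + 1 ≤ n) :
    2 ^ (3 * p + 1) * ∑ k ∈ Finset.range p, n.choose k ≤ (n - 1).choose p := by
  have h32 : 32 ≤ 2 ^ (3 * p + 2) := by
    calc (32 : ℕ) = 2 ^ 5 := by norm_num
    _ ≤ 2 ^ (3 * p + 2) := Nat.pow_le_pow_right (by norm_num) (by omega)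
  have hpp : p ≤ p ^ 2 := by nlinarith
  have h32p : 32 * p ^ 2 ≤ 2 ^ (3 * p + 2) * p ^ 2 := Nat.mul_le_mul_right _ h32
  have hn32 : 32 * p + p + 1 ≤ n := by nlinarith
  -- step 1
  have step1 : ∑ k ∈ Finset.range p, n.choose k ≤ p * n.choose (p - 1) := by
    calc ∑ k ∈ Finset.range p, n.choose k ≤ ∑ _k ∈ Finset.range p, n.choose (p-1) := by
          refine Finset.sum_le_sum fun k hk => chooseMonoLeft (by simp at hk; omega) (by omega)
    _ = p * n.choose (p - 1) := by simp [Finset.sum_const, mul_comm]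
  -- step 2 : choose n (p-1) ≤ 2 * choose (n-1) (p-1)
  have step2 : n.choose (p - 1) ≤ 2 * (n - 1).choose (p - 1) := by
    rcases Nat.eq_or_lt_of_le hp with h1 | h2
    · simp [← h1]
    · have key2 : n.choose (p-1) = (n-1).choose (p-2) + (n-1).choose (p-1) := by
        have h := Nat.choose_succ_succ (n-1) (p-2)
        simp only [Nat.succ_eq_add_one] at h
        rw [show (n-1)+1 = n by omega, show (p-2)+1 = p-1 by omega] at h
        exact h
      have hmono : (n - 1).choose (p - 2) ≤ (n - 1).choose (p - 1) :=
        chooseMonoLeft (by omega) (by omega)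
      omega
  -- step 3 : p * (n-1).choose p = (n-1).choose (p-1) * (n - p)
  have step3 : (n - 1).choose p * p = (n - 1).choose (p - 1) * (n - p) := by
    have := Nat.choose_succ_right_eq (n - 1) (p - 1)
    have hpe : p - 1 + 1 = p := by omega
    rw [hpe] at this
    have : (n-1).choose p * p = (n-1).choose (p-1) * (n - 1 - (p - 1)) := this
    rw [this]
    congr 1
    omega
  -- combine
  have key : 2 ^ (3 * p + 1) * (p * n.choose (p-1)) * p ≤ (n-1).choose p * p := by
    rw [step3]
    calc 2 ^ (3 * p + 1) * (p * n.choose (p - 1)) * p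
        ≤ 2 ^ (3 * p + 1) * (p * (2 * (n-1).choose (p-1))) * p := by
          exact Nat.mul_le_mul_right _ (Nat.mul_le_mul_left _ (Nat.mul_le_mul_left _ step2))
      _ = (n - 1).choose (p-1) * (2 ^ (3 * p + 2) * p ^ 2) := by ring
      _ ≤ (n - 1).choose (p-1) * (n - p) := by
          exact Nat.mul_le_mul_left _ (by omega)
  have hfin : 2 ^ (3 * p + 1) * (p * n.choose (p-1)) ≤ (n-1).choose p :=
    Nat.le_of_mul_le_mul_right (by exact key) (by omega)
  calc 2 ^ (3 * p + 1) * ∑ k ∈ Finset.range p, n.choose k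
      ≤ 2 ^ (3 * p + 1) * (p * n.choose (p-1)) := Nat.mul_le_mul_left _ step1
    _ ≤ (n-1).choose p := hfin

lemma traceCount {n p : ℕ} (hp : 1 ≤ p) (ℒ : Finset (Finset ℕ)) (S : Finset ℕ)
    (hsub : ∀ K ∈ ℒ, K ⊆ Finset.Icc 1 n)
    (hout : ∀ K ∈ ℒ, (K \ S).card ≤ p - 1) :
    ℒ.card ≤ 2 ^ S.card * ∑ k ∈ Finset.range p, n.choose k := by
  classical
  set T : Finset (Finset ℕ) := (Finset.range p).biUnion
    (fun k => (Finset.Icc 1 n).powersetCard k) with hT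
  have hTcard : T.card ≤ ∑ k ∈ Finset.range p, n.choose k := by
    refine (Finset.card_biUnion_le).trans ?_
    refine Finset.sum_le_sum fun k _ => ?_
    rw [Finset.card_powersetCard, Nat.card_Icc]
    simp
  have hinj : ℒ.card ≤ (S.powerset ×ˢ T).card := by
    refine Finset.card_le_card_of_injOn (fun K => (K ∩ S, K \ S)) ?_ ?_
    · intro K hK
      rw [Finset.mem_coe, Finset.mem_product]
      constructor
      · exact Finset.mem_powerset.2 Finset.inter_subset_right
      · rw [hT, Finset.mem_biUnion]
        refine ⟨(K \ S).card, Finset.mem_range.2 (by have := hout K hK; omega), ?_⟩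
        exact Finset.mem_powersetCard.2 ⟨(Finset.sdiff_subset).trans (hsub K hK), rfl⟩
    · intro K _ K' _ h
      have h1 : K ∩ S = K' ∩ S := congrArg Prod.fst h
      have h2 : K \ S = K' \ S := congrArg Prod.snd h
      calc K = K \ S ∪ K ∩ S := (Finset.sdiff_union_inter K S).symm
        _ = K' \ S ∪ K' ∩ S := by rw [h1, h2]
        _ = K' := Finset.sdiff_union_inter K' S
  calc ℒ.card ≤ (S.powerset ×ˢ T).card := hinj
    _ = 2 ^ S.card * T.card := by rw [Finset.card_product, Finset.card_powerset]
    _ ≤ 2 ^ S.card * ∑ k ∈ Finset.range p, n.choose k := Nat.mul_le_mul_left _ hTcard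

lemma smallCount {n p : ℕ} (𝒮 : Finset (Finset ℕ))
    (hsub : ∀ K ∈ 𝒮, K ⊆ Finset.Icc 1 n)
    (hsmall : ∀ K ∈ 𝒮, K.card ≤ p) :
    𝒮.card ≤ ∑ i ∈ Finset.range (p + 1), n.choose i := by
  classical
  have h : 𝒮 ⊆ (Finset.range (p+1)).biUnion (fun k => (Finset.Icc 1 n).powersetCard k) := by
    intro K hK
    rw [Finset.mem_biUnion]
    exact ⟨K.card, Finset.mem_range.2 (by have := hsmall K hK; omega),
      Finset.mem_powersetCard.2 ⟨hsub K hK, rfl⟩⟩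
  refine (Finset.card_le_card h).trans ?_
  refine (Finset.card_biUnion_le).trans ?_
  refine Finset.sum_le_sum fun k _ => ?_
  rw [Finset.card_powersetCard, Nat.card_Icc]
  simp

lemma ekrTransfer {n r : ℕ} (hn : 0 < n) (hr : 0 < r) (hr2 : r ≤ n / 2)
    (ℒ : Finset (Finset ℕ))
    (hsub : ∀ K ∈ ℒ, K ⊆ Finset.Icc 1 n)
    (hsize : ∀ K ∈ ℒ, K.card = r)
    (hint : ∀ A ∈ ℒ, ∀ B ∈ ℒ, (A ∩ B).Nonempty) :
    ℒ.card ≤ (n - 1).choose (r - 1) := by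
  classical
  set f : ℕ → Fin n := fun x => ⟨(x - 1) % n, Nat.mod_lt _ hn⟩ with hf
  have hfval : ∀ x ∈ Finset.Icc 1 n, (f x : ℕ) = x - 1 := by
    intro x hx
    rw [Finset.mem_Icc] at hx
    simp only [hf]
    exact Nat.mod_eq_of_lt (by omega)
  have hrecover : ∀ K : Finset ℕ, K ⊆ Finset.Icc 1 n →
      (K.image f).image (fun i : Fin n => (i : ℕ) + 1) = K := by
    intro K hK
    rw [Finset.image_image]
    rw [show ((fun i : Fin n => (i : ℕ) + 1) ∘ f) = fun x => (f x : ℕ) + 1 from rfl]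
    have : ∀ x ∈ K, (f x : ℕ) + 1 = x := by
      intro x hx
      have hx' := hK hx
      rw [hfval x hx']
      rw [Finset.mem_Icc] at hx'
      omega
    calc K.image (fun x => (f x : ℕ) + 1) = K.image id := Finset.image_congr (by
          intro x hx; exact this x hx)
      _ = K := Finset.image_id
  set ℒ' : Finset (Finset (Fin n)) := ℒ.image (fun K => K.image f) with hL'
  have hcard' : ℒ'.card = ℒ.card := by
    rw [hL']
    apply Finset.card_image_of_injOn
    intro K hK K' hK' h
    have := congrArg (fun s : Finset (Fin n) => s.image (fun i : Fin n => (i : ℕ) + 1)) h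
    simpa [hrecover K (hsub K hK), hrecover K' (hsub K' hK')] using this
  have hfinjK : ∀ K ∈ ℒ, Set.InjOn f K := by
    intro K hK x hx y hy hxy
    have hx' := hsub K hK hx
    have hy' := hsub K hK hy
    have : (f x : ℕ) = (f y : ℕ) := congrArg Fin.val hxy
    rw [hfval x hx', hfval y hy'] at this
    rw [Finset.mem_Icc] at hx' hy'
    omega
  have hsized : (ℒ' : Set (Finset (Fin n))).Sized r := by
    intro A hA
    simp only [hL', Finset.coe_image, Set.mem_image, Finset.mem_coe] at hA
    obtain ⟨K, hK, rfl⟩ := hA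
    rw [Finset.card_image_of_injOn (hfinjK K hK)]
    exact hsize K hK
  have hinter : (ℒ' : Set (Finset (Fin n))).Intersecting := by
    intro A hA B hB
    simp only [hL', Finset.coe_image, Set.mem_image, Finset.mem_coe] at hA hB
    obtain ⟨K, hK, rfl⟩ := hA
    obtain ⟨K', hK', rfl⟩ := hB
    obtain ⟨x, hx⟩ := hint K hK K' hK'
    rw [Finset.mem_inter] at hx
    rw [Finset.disjoint_left]
    intro hdisj
    exact hdisj (Finset.mem_image_of_mem f hx.1) (Finset.mem_image_of_mem f hx.2)
  have := Finset.erdos_ko_rado hinter hsized hr2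
  omega

lemma traceFinish {n p : ℕ} (hp : 1 ≤ p) (hn : 2 ^ (3 * p + 2) * p ^ 2 + p + 1 ≤ n)
    (ℒ : Finset (Finset ℕ)) (S : Finset ℕ)
    (hsub : ∀ K ∈ ℒ, K ⊆ Finset.Icc 1 n)
    (hout : ∀ K ∈ ℒ, (K \ S).card ≤ p - 1)
    (hS : S.card ≤ 3 * p + 1) :
    ℒ.card ≤ (n - 1).choose p := by
  refine (traceCount hp ℒ S hsub hout).trans ?_
  refine le_trans (Nat.mul_le_mul_right _ (Nat.pow_le_pow_right (by norm_num) hS)) ?_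
  exact keyIneq hp hn

lemma largeBound {n p : ℕ} (hp : 1 ≤ p) (hn : 2 ^ (3 * p + 2) * p ^ 2 + p + 1 ≤ n)
    (ℒ : Finset (Finset ℕ))
    (hsub : ∀ K ∈ ℒ, K ⊆ Finset.Icc 1 n)
    (hbig : ∀ K ∈ ℒ, p + 1 ≤ K.card)
    (hU : ∀ G ∈ ℒ, ∀ H ∈ ℒ, ∀ K ∈ ℒ,
      (G ∪ H).card + (H ∪ K).card + (K ∪ G).card ≤ 6 * p + 4) :
    ℒ.card ≤ (n - 1).choose p := by
  classical
  have h32 : 32 ≤ 2 ^ (3 * p + 2) := by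
    calc (32 : ℕ) = 2 ^ 5 := by norm_num
    _ ≤ 2 ^ (3 * p + 2) := Nat.pow_le_pow_right (by norm_num) (by omega)
  have hpp : p ≤ p ^ 2 := by nlinarith
  have h32p : 32 * p ^ 2 ≤ 2 ^ (3 * p + 2) * p ^ 2 := Nat.mul_le_mul_right _ h32
  have hn32 : 32 * p + p + 1 ≤ n := by nlinarith
  rcases ℒ.eq_empty_or_nonempty with hemp | hne
  · simp [hemp]
  obtain ⟨G, hG, hGmax⟩ := Finset.exists_max_image ℒ Finset.card hne
  have hq : p + 1 ≤ G.card := hbig G hG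
  by_cases hq2 : p + 2 ≤ G.card
  · -- some set of size ≥ p+2
    obtain ⟨H0, hH0, hH0max⟩ := Finset.exists_max_image ℒ (fun K => (K \ G).card) hne
    set u := (H0 \ G).card with hu
    set S := G ∪ (H0 \ G) with hSdef
    have hScard : S.card = G.card + u := by
      rw [hSdef]
      exact Finset.card_union_of_disjoint sdiff_disjoint.symm
    have eGH0 : (H0 ∪ G).card = u + G.card := (Finset.card_sdiff_add_card H0 G).symm
    have hSb : S.card ≤ 3 * p + 1 := by
      have h3 := hU G hG H0 hH0 H0 hH0
      rw [Finset.union_self, Finset.union_comm G H0] at h3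
      have hbH0 := hbig H0 hH0
      omega
    have hKout : ∀ K ∈ ℒ, (K \ S).card ≤ p - 1 := by
      intro K hK
      have hKS : K \ S = (K \ G) \ (H0 \ G) := by
        rw [hSdef]; exact (sdiff_sdiff K G (H0 \ G)).symm
      by_cases hup : u ≤ p - 1
      · have h1 : K \ S ⊆ K \ G := by
          rw [hKS]; exact Finset.sdiff_subset
        have h2 := Finset.card_le_card h1
        have h3 := hH0max K hK
        omega
      · have hupge : p ≤ u := by omega
        have h3 := hU G hG K hK H0 hH0
        have e1 : (G ∪ K).card = (K \ G).card + G.card := by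
          rw [Finset.union_comm]; exact (Finset.card_sdiff_add_card K G).symm
        have hsubKH : (K ∩ G) ∪ ((K \ G) ∪ (H0 \ G)) ⊆ K ∪ H0 := by
          refine Finset.union_subset ?_ (Finset.union_subset ?_ ?_)
          · exact Finset.inter_subset_left.trans Finset.subset_union_left
          · exact Finset.sdiff_subset.trans Finset.subset_union_left
          · exact Finset.sdiff_subset.trans Finset.subset_union_right
        have hdisj : Disjoint (K ∩ G) ((K \ G) ∪ (H0 \ G)) := by
          rw [Finset.disjoint_union_right]
          constructor
          · exact (sdiff_disjoint.symm).mono Finset.inter_subset_right Finset.Subset.rfl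
          · exact (sdiff_disjoint.symm).mono Finset.inter_subset_right Finset.Subset.rfl
        have e2 : (K ∩ G).card + ((K \ G) ∪ (H0 \ G)).card ≤ (K ∪ H0).card := by
          rw [← Finset.card_union_of_disjoint hdisj]
          exact Finset.card_le_card hsubKH
        have e4 : ((K \ G) \ (H0 \ G)).card + u = ((K \ G) ∪ (H0 \ G)).card :=
          Finset.card_sdiff_add_card (K \ G) (H0 \ G)
        have e5 : (K ∩ G).card + (K \ G).card = K.card :=
          Finset.card_inter_add_card_sdiff K G
        have e6 : p + 1 ≤ K.card := hbig K hK
        rw [hKS]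
        omega
    exact traceFinish hp hn ℒ S hsub hKout hSb
  · -- all sets have size exactly p + 1
    have hall : ∀ K ∈ ℒ, K.card = p + 1 := by
      intro K hK
      have := hGmax K hK
      have := hbig K hK
      omega
    by_cases hint : ∀ A ∈ ℒ, ∀ B ∈ ℒ, (A ∩ B).Nonempty
    · have := ekrTransfer (n := n) (r := p + 1) (by omega) (by omega) (by omega)
        ℒ hsub hall hint
      simpa using this
    · push_neg at hint
      obtain ⟨G0, hG0, H0, hH0, hGH⟩ := hint
      have hdisjGH : Disjoint G0 H0 := Finset.disjoint_iff_inter_eq_empty.2 hGH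
      set S := G0 ∪ H0 with hSdef
      have hScard : S.card = 2 * p + 2 := by
        rw [hSdef, Finset.card_union_of_disjoint hdisjGH, hall G0 hG0, hall H0 hH0]
        ring
      have hKout : ∀ K ∈ ℒ, (K \ S).card ≤ p - 1 := by
        intro K hK
        have e0 : (G0 ∪ H0).card = 2 * p + 2 := by rw [← hSdef]; exact hScard
        have h3 := hU G0 hG0 H0 hH0 K hK
        have e1 : (H0 ∪ K).card + (H0 ∩ K).card = H0.card + K.card :=
          Finset.card_union_add_card_inter H0 K
        have e2 : (K ∪ G0).card + (K ∩ G0).card = K.card + G0.card :=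
          Finset.card_union_add_card_inter K G0
        have e3 : (K ∩ S).card = (K ∩ G0).card + (K ∩ H0).card := by
          rw [hSdef, Finset.inter_union_distrib_left]
          exact Finset.card_union_of_disjoint
            (hdisjGH.mono Finset.inter_subset_right Finset.inter_subset_right)
        have e4 : (K ∩ S).card + (K \ S).card = K.card :=
          Finset.card_inter_add_card_sdiff K S
        have e5 : (H0 ∩ K).card = (K ∩ H0).card := by rw [Finset.inter_comm]
        have e6 := hall K hK
        have e7 := hall G0 hG0
        have e8 := hall H0 hH0
        omega
      exact traceFinish hp hn ℒ S hsub hKout (by omega)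

lemma coreBound {n p : ℕ} (hp : 1 ≤ p) (hn : 2 ^ (3 * p + 2) * p ^ 2 + p + 1 ≤ n)
    (𝒢 : Finset (Finset ℕ))
    (hsub : ∀ K ∈ 𝒢, K ⊆ Finset.Icc 1 n)
    (hU : ∀ G ∈ 𝒢, ∀ H ∈ 𝒢, ∀ K ∈ 𝒢,
      (G ∪ H).card + (H ∪ K).card + (K ∪ G).card ≤ 6 * p + 4) :
    𝒢.card ≤ (∑ i ∈ Finset.range (p + 1), n.choose i) + (n - 1).choose p := by
  classical
  have hsplit := Finset.card_filter_add_card_filter_not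
    (s := 𝒢) (p := fun K => K.card ≤ p)
  have h1 : (𝒢.filter (fun K => K.card ≤ p)).card ≤ ∑ i ∈ Finset.range (p + 1), n.choose i := by
    refine smallCount _ ?_ ?_
    · intro K hK; exact hsub K (Finset.mem_filter.1 hK).1
    · intro K hK; exact (Finset.mem_filter.1 hK).2
  have h2 : (𝒢.filter (fun K => ¬ K.card ≤ p)).card ≤ (n - 1).choose p := by
    refine largeBound hp hn _ ?_ ?_ ?_
    · intro K hK; exact hsub K (Finset.mem_filter.1 hK).1
    · intro K hK; have := (Finset.mem_filter.1 hK).2; omega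
    · intro G hG H hH K hK
      exact hU G (Finset.mem_filter.1 hG).1 H (Finset.mem_filter.1 hH).1 K (Finset.mem_filter.1 hK).1
  omega

lemma upperBound {n p : ℕ} (hp : 1 ≤ p) (hn : 2 ^ (3 * p + 2) * p ^ 2 + p + 1 ≤ n)
    (𝓕 : Finset (Finset ℕ)) (h1 : ∀ F ∈ 𝓕, F ⊆ Finset.Icc 1 n)
    (h2 : ∀ A ∈ 𝓕, ∀ B ∈ 𝓕, ∀ C ∈ 𝓕, 3 * n - (6 * p + 4) ≤ dd A B C) :
    𝓕.card ≤ (∑ i ∈ Finset.range (p + 1), n.choose i) + (n - 1).choose p := by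
  classical
  set c : Finset ℕ → Finset ℕ := fun F => Finset.Icc 1 n \ F with hc
  have hrec : ∀ F : Finset ℕ, F ⊆ Finset.Icc 1 n → c (c F) = F := by
    intro F hF
    rw [hc]
    simp only
    rw [Finset.sdiff_sdiff_self_left]
    exact Finset.inter_eq_right.2 hF
  set 𝒢 := 𝓕.image c with hG
  have hcard : 𝒢.card = 𝓕.card := by
    rw [hG]
    apply Finset.card_image_of_injOn
    intro A hA B hB h
    have := congrArg c h
    rwa [hrec A (h1 A hA), hrec B (h1 B hB)] at this
  have hkey : ∀ A : Finset ℕ, A ⊆ Finset.Icc 1 n → ∀ B : Finset ℕ, B ⊆ Finset.Icc 1 n →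
      (c A ∪ c B).card = n - (A ∩ B).card ∧ (A ∩ B).card ≤ n := by
    intro A hA B hB
    have hu : c A ∪ c B = Finset.Icc 1 n \ (A ∩ B) := by
      rw [hc]; simp only; ext x
      simp only [Finset.mem_union, Finset.mem_sdiff, Finset.mem_inter]
      tauto
    have hABn : (A ∩ B).card ≤ n := by
      have h := Finset.card_le_card ((Finset.inter_subset_left (s₁ := A) (s₂ := B)).trans hA)
      simpa using h
    constructor
    · rw [hu, Finset.card_sdiff_of_subset ((Finset.inter_subset_left (s₁ := A) (s₂ := B)).trans hA), Nat.card_Icc]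
      simp
    · exact hABn
  have hUb : ∀ G ∈ 𝒢, ∀ H ∈ 𝒢, ∀ K ∈ 𝒢,
      (G ∪ H).card + (H ∪ K).card + (K ∪ G).card ≤ 6 * p + 4 := by
    intro G hG' H hH' K hK'
    rw [hG] at hG' hH' hK'
    obtain ⟨A, hA, rfl⟩ := Finset.mem_image.1 hG'
    obtain ⟨B, hB, rfl⟩ := Finset.mem_image.1 hH'
    obtain ⟨C, hC, rfl⟩ := Finset.mem_image.1 hK'
    obtain ⟨e1, l1⟩ := hkey A (h1 A hA) B (h1 B hB)
    obtain ⟨e2, l2⟩ := hkey B (h1 B hB) C (h1 C hC)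
    obtain ⟨e3, l3⟩ := hkey C (h1 C hC) A (h1 A hA)
    have hd := h2 A hA B hB C hC
    unfold dd at hd
    rw [e1, e2, e3]
    omega
  have hsubG : ∀ K ∈ 𝒢, K ⊆ Finset.Icc 1 n := by
    rw [hG]
    intro K hK
    obtain ⟨A, _, rfl⟩ := Finset.mem_image.1 hK
    exact Finset.sdiff_subset
  rw [← hcard]
  exact coreBound hp hn 𝒢 hsubG hUb

lemma memberConstruct {n p : ℕ} (hp : 1 ≤ p) (hn : 2 ^ (3 * p + 2) * p ^ 2 + p + 1 ≤ n) :
    ∃ 𝓕 : Finset (Finset ℕ), (∀ F ∈ 𝓕, F ⊆ Finset.Icc 1 n) ∧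
      (∀ A ∈ 𝓕, ∀ B ∈ 𝓕, ∀ C ∈ 𝓕, 3 * n - (6 * p + 4) ≤ dd A B C) ∧
      𝓕.card = (∑ i ∈ Finset.range (p + 1), n.choose i) + (n - 1).choose p := by
  classical
  have h32 : 32 ≤ 2 ^ (3 * p + 2) := by
    calc (32 : ℕ) = 2 ^ 5 := by norm_num
    _ ≤ 2 ^ (3 * p + 2) := Nat.pow_le_pow_right (by norm_num) (by omega)
  have hpp : p ≤ p ^ 2 := by nlinarith
  have h32p : 32 * p ^ 2 ≤ 2 ^ (3 * p + 2) * p ^ 2 := Nat.mul_le_mul_right _ h32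
  have hn32 : 32 * p + p + 1 ≤ n := by nlinarith
  set 𝒜 : Finset (Finset ℕ) := (Finset.Icc 1 n).powerset.filter (fun F => F.card ≤ p) with hA
  set ℬ : Finset (Finset ℕ) :=
    (Finset.Icc 1 n).powerset.filter (fun F => F.card = p + 1 ∧ 1 ∈ F) with hB
  have hdisj : Disjoint 𝒜 ℬ := by
    rw [Finset.disjoint_left]
    intro F hFA hFB
    rw [hA, Finset.mem_filter] at hFA
    rw [hB, Finset.mem_filter] at hFB
    omega
  have hcardA : 𝒜.card = ∑ i ∈ Finset.range (p + 1), n.choose i := by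
    have heq : 𝒜 = (Finset.range (p + 1)).biUnion
        (fun i => (Finset.Icc 1 n).powersetCard i) := by
      ext F
      rw [hA, Finset.mem_filter, Finset.mem_powerset, Finset.mem_biUnion]
      constructor
      · rintro ⟨hsub, hcard⟩
        exact ⟨F.card, Finset.mem_range.2 (by omega), Finset.mem_powersetCard.2 ⟨hsub, rfl⟩⟩
      · rintro ⟨i, hi, hmem⟩
        rw [Finset.mem_powersetCard] at hmem
        rw [Finset.mem_range] at hi
        exact ⟨hmem.1, by omega⟩
    rw [heq, Finset.card_biUnion]
    · refine Finset.sum_congr rfl fun i _ => ?_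
      rw [Finset.card_powersetCard, Nat.card_Icc]
      simp
    · intro i _ j _ hij
      exact (Finset.Icc 1 n).pairwise_disjoint_powersetCard hij
  have hcardB : ℬ.card = (n - 1).choose p := by
    have heq : ℬ = ((Finset.Icc 2 n).powersetCard p).image (insert 1) := by
      ext F
      rw [hB, Finset.mem_filter, Finset.mem_powerset, Finset.mem_image]
      constructor
      · rintro ⟨hsub, hcard, h1F⟩
        refine ⟨F.erase 1, Finset.mem_powersetCard.2 ⟨?_, ?_⟩, Finset.insert_erase h1F⟩
        · intro x hx
          rw [Finset.mem_erase] at hx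
          have := hsub hx.2
          rw [Finset.mem_Icc] at this ⊢
          omega
        · rw [Finset.card_erase_of_mem h1F, hcard]; omega
      · rintro ⟨F', hF', rfl⟩
        rw [Finset.mem_powersetCard] at hF'
        have h1nF' : 1 ∉ F' := by
          intro h
          have := hF'.1 h
          rw [Finset.mem_Icc] at this
          omega
        refine ⟨?_, ?_, Finset.mem_insert_self 1 F'⟩
        · refine Finset.insert_subset ?_ ?_
          · rw [Finset.mem_Icc]; omega
          · intro x hx
            have := hF'.1 hx
            rw [Finset.mem_Icc] at this ⊢
            omega
        · rw [Finset.card_insert_of_notMem h1nF', hF'.2]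
    rw [heq]
    rw [Finset.card_image_of_injOn, Finset.card_powersetCard, Nat.card_Icc]
    · congr 1
    · intro F1 h1 F2 h2 h
      rw [Finset.mem_coe, Finset.mem_powersetCard] at h1 h2
      have h1n : 1 ∉ F1 := fun hx => by
        have := h1.1 hx; rw [Finset.mem_Icc] at this; omega
      have h2n : 1 ∉ F2 := fun hx => by
        have := h2.1 hx; rw [Finset.mem_Icc] at this; omega
      have := congrArg (fun s : Finset ℕ => s.erase 1) h
      simpa [Finset.erase_insert h1n, Finset.erase_insert h2n] using this
  set 𝒢 : Finset (Finset ℕ) := 𝒜 ∪ ℬ with hGdef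
  have hGsub : ∀ G ∈ 𝒢, G ⊆ Finset.Icc 1 n := by
    intro G hG
    rw [hGdef, Finset.mem_union] at hG
    rcases hG with h | h
    · exact Finset.mem_powerset.1 (Finset.mem_filter.1 h).1
    · exact Finset.mem_powerset.1 (Finset.mem_filter.1 h).1
  have hGcard : 𝒢.card = (∑ i ∈ Finset.range (p + 1), n.choose i) + (n - 1).choose p := by
    rw [hGdef, Finset.card_union_of_disjoint hdisj, hcardA, hcardB]
  have hpair : ∀ G ∈ 𝒢, ∀ H ∈ 𝒢, (G ∪ H).card ≤ 2 * p + 1 := by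
    intro G hG H hH
    rw [hGdef, Finset.mem_union] at hG hH
    have hcu := Finset.card_union_le G H
    rcases hG with hG | hG
    · have h1 := (Finset.mem_filter.1 hG).2
      rcases hH with hH | hH
      · have h2 := (Finset.mem_filter.1 hH).2
        omega
      · have h2 := (Finset.mem_filter.1 hH).2.1
        omega
    · rcases hH with hH | hH
      · have h1 := (Finset.mem_filter.1 hG).2.1
        have h2 := (Finset.mem_filter.1 hH).2
        omega
      · have h1 := (Finset.mem_filter.1 hG).2
        have h2 := (Finset.mem_filter.1 hH).2
        have hinter : 0 < (G ∩ H).card := by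
          refine Finset.card_pos.2 ⟨1, ?_⟩
          rw [Finset.mem_inter]
          exact ⟨h1.2, h2.2⟩
        have := Finset.card_union_add_card_inter G H
        omega
  -- now build 𝓕
  refine ⟨𝒢.image (fun G => Finset.Icc 1 n \ G), ?_, ?_, ?_⟩
  · intro F hF
    obtain ⟨G, _, rfl⟩ := Finset.mem_image.1 hF
    exact Finset.sdiff_subset
  · intro A hA' B hB' C hC'
    obtain ⟨G, hG, rfl⟩ := Finset.mem_image.1 hA'
    obtain ⟨H, hH, rfl⟩ := Finset.mem_image.1 hB'
    obtain ⟨K, hK, rfl⟩ := Finset.mem_image.1 hC'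
    have key : ∀ X : Finset ℕ, X ⊆ Finset.Icc 1 n → ∀ Y : Finset ℕ, Y ⊆ Finset.Icc 1 n →
        ((Finset.Icc 1 n \ X) ∩ (Finset.Icc 1 n \ Y)).card = n - (X ∪ Y).card := by
      intro X hX Y hY
      have hu : (Finset.Icc 1 n \ X) ∩ (Finset.Icc 1 n \ Y) = Finset.Icc 1 n \ (X ∪ Y) := by
        ext x
        simp only [Finset.mem_inter, Finset.mem_sdiff, Finset.mem_union]
        tauto
      rw [hu, Finset.card_sdiff_of_subset (Finset.union_subset hX hY), Nat.card_Icc]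
      simp
    unfold dd
    rw [key G (hGsub G hG) H (hGsub H hH), key H (hGsub H hH) K (hGsub K hK),
      key K (hGsub K hK) G (hGsub G hG)]
    have e1 := hpair G hG H hH
    have e2 := hpair H hH K hK
    have e3 := hpair K hK G hG
    omega
  · rw [Finset.card_image_of_injOn, hGcard]
    intro X hX Y hY h
    have hX' := hGsub X hX
    have hY' := hGsub Y hY
    have := congrArg (fun s : Finset ℕ => Finset.Icc 1 n \ s) h
    simp only at this
    rwa [Finset.sdiff_sdiff_self_left, Finset.sdiff_sdiff_self_left,
      Finset.inter_eq_right.2 hX', Finset.inter_eq_right.2 hY'] at this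

theorem stmt18 (n p : ℕ) (hp : 1 ≤ p) (hn : 2 ^ (3 * p + 2) * p ^ 2 + p + 1 ≤ n) :
    IsGreatest {m : ℕ | ∃ 𝓕 : Finset (Finset ℕ), (∀ F ∈ 𝓕, F ⊆ Finset.Icc 1 n) ∧
        (∀ A ∈ 𝓕, ∀ B ∈ 𝓕, ∀ C ∈ 𝓕, 3 * n - (6 * p + 4) ≤ dd A B C) ∧ 𝓕.card = m}
      ((∑ i ∈ Finset.range (p + 1), n.choose i) + (n - 1).choose p) := by
  constructor
  · obtain ⟨𝓕, h1, h2, h3⟩ := memberConstruct hp hn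
    exact ⟨𝓕, h1, h2, h3⟩
  · rintro m ⟨𝓕, h1, h2, rfl⟩
    exact upperBound hp hn 𝓕 h1 h2
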